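/- arXiv:math/0507376 — 6 statements merged into one kernel-verified Lean document; each statement's English description precedes it below -/
import Mathlib

section
/- Let σ and η be permutations of the set {1,2,3}×{1,2,3} and let A_σ, A_η be their associated 3×3 transition matrices. Then A_σ and A_η are permutation-conjugate if and only if Tr(A_σ) = Tr(A_η) and Tr(A_σ² + A_σ) = Tr(A_η² + A_η). -/
/-- The permutation matrix of a permutation `σ` (entries in `ℕ`). -/
def permMat {n : Type*} [DecidableEq n] (σ : Equiv.Perm n) : Matrix n n ℕ :=
  fun i j => if σ j = i then 1 else 0

/-- Two square ℕ-valued matrices are permutation-conjugate if `T * A * T⁻¹ = B`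
for some permutation matrix `T`, equivalently `T * A = B * T`. -/
def PermConj {n : Type*} [Fintype n] [DecidableEq n] (A B : Matrix n n ℕ) : Prop :=
  ∃ σ : Equiv.Perm n, permMat σ * A = B * permMat σ

/-- The transition matrix of a permutation of `{1,2,3} × {1,2,3}`:
`(A_σ)_{j,k} = #{(n,m) : σ(n,k) = (j,m)}`. -/
def Amat (σ : Equiv.Perm (Fin 3 × Fin 3)) : Matrix (Fin 3) (Fin 3) ℕ :=
  fun j k => (Finset.univ.filter (fun nm : Fin 3 × Fin 3 => σ (nm.1, k) = (j, nm.2))).card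

/-! ### Auxiliary lemmas -/

lemma Amat_apply' (σ : Equiv.Perm (Fin 3 × Fin 3)) (j k : Fin 3) :
    Amat σ j k = (Finset.univ.filter fun n : Fin 3 => (σ (n, k)).1 = j).card := by
  unfold Amat
  apply Finset.card_bij (fun nm _ => nm.1)
  · intro nm h
    simp only [Finset.mem_filter, Finset.mem_univ, true_and] at h ⊢
    rw [h]
  · intro a ha b hb hab
    simp only [Finset.mem_filter, Finset.mem_univ, true_and] at ha hb
    have h2 : (j, a.2) = (j, b.2) := ha.symm.trans (by rw [hab]; exact hb)
    exact Prod.ext hab (Prod.ext_iff.1 h2).2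
  · intro n hn
    simp only [Finset.mem_filter, Finset.mem_univ, true_and] at hn
    exact ⟨(n, (σ (n, k)).2), by simp [Prod.ext_iff, hn], rfl⟩

lemma Amat_col_sum (σ : Equiv.Perm (Fin 3 × Fin 3)) (k : Fin 3) :
    Amat σ 0 k + Amat σ 1 k + Amat σ 2 k = 3 := by
  have h := Finset.card_eq_sum_card_fiberwise
    (f := fun n : Fin 3 => (σ (n, k)).1) (s := Finset.univ) (t := Finset.univ)
    (fun x _ => Finset.mem_univ _)
  simp only [Finset.card_univ, Fintype.card_fin, Fin.sum_univ_three] at h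
  simp only [Amat_apply']
  omega

lemma Amat_row_sum (σ : Equiv.Perm (Fin 3 × Fin 3)) (j : Fin 3) :
    Amat σ j 0 + Amat σ j 1 + Amat σ j 2 = 3 := by
  have key : ∀ k, Amat σ j k =
      ((Finset.univ.filter fun p : Fin 3 × Fin 3 => (σ p).1 = j).filter
        fun p => p.2 = k).card := by
    intro k
    rw [Amat_apply']
    apply Finset.card_bij (fun n _ => (n, k))
    · intro n hn
      simp only [Finset.mem_filter, Finset.mem_univ, true_and] at hn ⊢
      exact ⟨hn, trivial⟩
    · intro a _ b _ hab
      exact (Prod.ext_iff.1 hab).1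
    · intro p hp
      simp only [Finset.mem_filter, Finset.mem_univ, true_and] at hp
      refine ⟨p.1, ?_, by rw [← hp.2]⟩
      simp only [Finset.mem_filter, Finset.mem_univ, true_and]
      rw [← hp.2, Prod.mk.eta]
      exact hp.1
  have h := Finset.card_eq_sum_card_fiberwise
    (f := fun p : Fin 3 × Fin 3 => p.2)
    (s := Finset.univ.filter fun p : Fin 3 × Fin 3 => (σ p).1 = j) (t := Finset.univ)
    (fun x _ => Finset.mem_univ _)
  have hcard : (Finset.univ.filter fun p : Fin 3 × Fin 3 => (σ p).1 = j).card = 3 := by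
    have := Finset.card_bij
      (fun (p : Fin 3 × Fin 3) (_ : p ∈ Finset.univ.filter fun p => (σ p).1 = j) => σ p)
      (t := Finset.univ.filter fun q : Fin 3 × Fin 3 => q.1 = j)
      (fun p hp => by simpa using (Finset.mem_filter.1 hp).2)
      (fun a _ b _ h => σ.injective h)
      (fun q hq => ⟨σ.symm q, by simpa using (Finset.mem_filter.1 hq).2, by simp⟩)
    rw [this]
    fin_cases j <;> decide
  rw [Fin.sum_univ_three] at h
  beta_reduce at h
  simp only [key]
  omega

/-- The generic 3×3 matrix with row and column sums 3, parametrized by its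
top-left 2×2 block. -/
def Mgen (a b c d : ℕ) : Matrix (Fin 3) (Fin 3) ℕ :=
  !![a, b, 3-a-b; c, d, 3-c-d; 3-a-c, 3-b-d, a+b+c+d-3]

lemma exists_param (σ : Equiv.Perm (Fin 3 × Fin 3)) :
    ∃ a b c d : ℕ, a+b ≤ 3 ∧ c+d ≤ 3 ∧ a+c ≤ 3 ∧ b+d ≤ 3 ∧ 3 ≤ a+b+c+d ∧
      Amat σ = Mgen a b c d := by
  have hc0 := Amat_col_sum σ 0; have hc1 := Amat_col_sum σ 1; have hc2 := Amat_col_sum σ 2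
  have hr0 := Amat_row_sum σ 0; have hr1 := Amat_row_sum σ 1; have hr2 := Amat_row_sum σ 2
  refine ⟨Amat σ 0 0, Amat σ 0 1, Amat σ 1 0, Amat σ 1 1,
    by omega, by omega, by omega, by omega, by omega, ?_⟩
  ext i j
  fin_cases i <;> fin_cases j <;> simp [Mgen] <;> omega

lemma permMat_mul_apply {n : Type*} [Fintype n] [DecidableEq n] (σ : Equiv.Perm n)
    (A : Matrix n n ℕ) (i j : n) : (permMat σ * A) i j = A (σ.symm i) j := by
  simp only [Matrix.mul_apply, permMat]
  rw [Finset.sum_eq_single (σ.symm i)]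
  · simp
  · intro b _ hb
    rw [if_neg, zero_mul]
    intro h; exact hb (by rw [← h]; simp)
  · simp

lemma mul_permMat_apply {n : Type*} [Fintype n] [DecidableEq n] (σ : Equiv.Perm n)
    (A : Matrix n n ℕ) (i j : n) : (A * permMat σ) i j = A i (σ j) := by
  simp only [Matrix.mul_apply, permMat]
  rw [Finset.sum_eq_single (σ j)]
  · simp
  · intro b _ hb
    rw [if_neg (fun h => hb h.symm), mul_zero]
  · simp

lemma permConj_of_reindex {n : Type*} [Fintype n] [DecidableEq n] (A B : Matrix n n ℕ)
    (t : Equiv.Perm n) (h : ∀ i j, B (t i) (t j) = A i j) : PermConj A B := by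
  refine ⟨t, ?_⟩
  ext i j
  rw [permMat_mul_apply, mul_permMat_apply]
  have := h (t.symm i) j
  rw [t.apply_symm_apply] at this
  exact this.symm

lemma permMat_mul_permMat {n : Type*} [Fintype n] [DecidableEq n] (σ τ : Equiv.Perm n) :
    permMat σ * permMat τ = permMat (σ * τ) := by
  ext i j
  rw [mul_permMat_apply]
  simp [permMat]
  rfl

lemma permMat_one {n : Type*} [Fintype n] [DecidableEq n] :
    permMat (1 : Equiv.Perm n) = 1 := by
  ext i j
  simp [permMat, Matrix.one_apply, eq_comm]

lemma trace_conj {n : Type*} [Fintype n] [DecidableEq n] {A B : Matrix n n ℕ}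
    (h : PermConj A B) :
    Matrix.trace A = Matrix.trace B ∧ Matrix.trace (A * A) = Matrix.trace (B * B) := by
  obtain ⟨t, ht⟩ := h
  have hTT : permMat t⁻¹ * permMat t = 1 := by
    rw [permMat_mul_permMat, inv_mul_cancel, permMat_one]
  have hTT' : permMat t * permMat t⁻¹ = 1 := by
    rw [permMat_mul_permMat, mul_inv_cancel, permMat_one]
  have hB : B = permMat t * A * permMat t⁻¹ := by
    have : B * (permMat t * permMat t⁻¹) = permMat t * A * permMat t⁻¹ := by
      rw [← Matrix.mul_assoc, ← ht]
    rwa [hTT', mul_one] at this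
  have key : ∀ X : Matrix n n ℕ, (permMat t * X * permMat t⁻¹).trace = X.trace := by
    intro X
    rw [Matrix.trace_mul_comm, ← Matrix.mul_assoc, hTT, Matrix.one_mul]
  have hB2 : B * B = permMat t * (A * A) * permMat t⁻¹ := by
    rw [hB]
    simp only [Matrix.mul_assoc]
    rw [← Matrix.mul_assoc (permMat t⁻¹) (permMat t), hTT, Matrix.one_mul]
  exact ⟨(key A).symm.trans (by rw [← hB]), (key (A * A)).symm.trans (by rw [← hB2])⟩

/-- The six permutations of `Fin 3`. -/
def threePerms : List (Equiv.Perm (Fin 3)) :=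
  [1, Equiv.swap 0 1, Equiv.swap 0 2, Equiv.swap 1 2,
   Equiv.swap 0 1 * Equiv.swap 1 2, Equiv.swap 1 2 * Equiv.swap 0 1]

def KeyProp : Prop := ∀ a b c d a' b' c' d' : Fin 4,
    ((a:ℕ) + b ≤ 3 ∧ (c:ℕ) + d ≤ 3 ∧ (a:ℕ) + c ≤ 3 ∧ (b:ℕ) + d ≤ 3 ∧
      3 ≤ (a:ℕ) + b + c + d) →
    ((a':ℕ) + b' ≤ 3 ∧ (c':ℕ) + d' ≤ 3 ∧ (a':ℕ) + c' ≤ 3 ∧ (b':ℕ) + d' ≤ 3 ∧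
      3 ≤ (a':ℕ) + b' + c' + d') →
    Matrix.trace (Mgen a b c d) = Matrix.trace (Mgen a' b' c' d') →
    Matrix.trace (Mgen a b c d * Mgen a b c d) =
      Matrix.trace (Mgen a' b' c' d' * Mgen a' b' c' d') →
    ∃ t ∈ threePerms, ∀ i j, Mgen (a':ℕ) b' c' d' (t i) (t j) = Mgen (a:ℕ) b c d i j

instance : Decidable KeyProp := by
  unfold KeyProp
  haveI : ∀ (M N : Matrix (Fin 3) (Fin 3) ℕ) (i j k l : Fin 3), Decidable (M i j = N k l) :=
    fun _ _ _ _ _ _ => Nat.decEq _ _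
  infer_instance

set_option maxRecDepth 100000 in
set_option maxHeartbeats 4000000 in
lemma keyProp_holds : KeyProp := by decide

/-- `A_σ` and `A_η` are permutation-conjugate iff
`Tr A_σ = Tr A_η` and `Tr(A_σ² + A_σ) = Tr(A_η² + A_η)`. -/
theorem permConj_iff_traces (σ η : Equiv.Perm (Fin 3 × Fin 3)) :
    PermConj (Amat σ) (Amat η) ↔
      (Matrix.trace (Amat σ) = Matrix.trace (Amat η) ∧
        Matrix.trace ((Amat σ) ^ 2 + Amat σ) = Matrix.trace ((Amat η) ^ 2 + Amat η)) := by
  constructor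
  · intro h
    obtain ⟨h1, h2⟩ := trace_conj h
    refine ⟨h1, ?_⟩
    simp only [Matrix.trace_add, pow_two]
    rw [h1, h2]
  · rintro ⟨h1, h2⟩
    simp only [Matrix.trace_add, pow_two] at h2
    have h2' : Matrix.trace (Amat σ * Amat σ) = Matrix.trace (Amat η * Amat η) := by
      omega
    obtain ⟨a, b, c, d, hab, hcd, hac, hbd, hs, hA⟩ := exists_param σ
    obtain ⟨a', b', c', d', hab', hcd', hac', hbd', hs', hA'⟩ := exists_param η
    rw [hA, hA'] at h1 h2' ⊢
    have := keyProp_holds ⟨a, by omega⟩ ⟨b, by omega⟩ ⟨c, by omega⟩ ⟨d, by omega⟩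
      ⟨a', by omega⟩ ⟨b', by omega⟩ ⟨c', by omega⟩ ⟨d', by omega⟩
      ⟨hab, hcd, hac, hbd, hs⟩ ⟨hab', hcd', hac', hbd', hs'⟩ h1 h2'
    obtain ⟨t, _, ht⟩ := this
    exact permConj_of_reindex _ _ t ht
end

section
/- The set of 3×3 matrices with natural-number entries all of whose row sums and column sums equal 3, considered up to permutation-conjugacy, has exactly 16 equivalence classes. (Equivalently, there are exactly 16 isomorphism classes of directed multigraphs on 3 vertices in which every vertex has 3 outgoing and 3 incoming edges.) -/
/-- `n × n` ℕ-matrices all of whose row sums and column sums equal `d`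
(adjacency matrices of `d`-regular directed multigraphs on `n` vertices). -/
def RegMat (n d : ℕ) : Type :=
  {A : Matrix (Fin n) (Fin n) ℕ // ∀ i, (∑ j, A i j = d) ∧ (∑ j, A j i = d)}

lemma permMat_mul {n : Type*} [Fintype n] [DecidableEq n] (σ τ : Equiv.Perm n) :
    permMat (σ * τ) = permMat σ * permMat τ := by
  ext i j
  simp only [permMat, Matrix.mul_apply, Equiv.Perm.mul_apply]
  rw [Finset.sum_eq_single (τ j)]
  · simp; congr
  · intro k _ hk
    have : τ j ≠ k := fun h => hk h.symm
    simp [this]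
  · intro h; exact absurd (Finset.mem_univ _) h

lemma permMat_inv_mul {n : Type*} [Fintype n] [DecidableEq n] (σ : Equiv.Perm n) :
    permMat σ⁻¹ * permMat σ = 1 := by
  rw [← permMat_mul, inv_mul_cancel, permMat_one]

lemma permMat_mul_inv {n : Type*} [Fintype n] [DecidableEq n] (σ : Equiv.Perm n) :
    permMat σ * permMat σ⁻¹ = 1 := by
  rw [← permMat_mul, mul_inv_cancel, permMat_one]

lemma permConj_equivalence {n : Type*} [Fintype n] [DecidableEq n] :
    Equivalence (PermConj (n := n)) := by
  constructor
  · intro A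
    exact ⟨1, by rw [permMat_one, one_mul, mul_one]⟩
  · rintro A B ⟨σ, h⟩
    refine ⟨σ⁻¹, ?_⟩
    calc permMat σ⁻¹ * B = permMat σ⁻¹ * B * (permMat σ * permMat σ⁻¹) := by
            rw [permMat_mul_inv, mul_one]
      _ = permMat σ⁻¹ * (B * permMat σ) * permMat σ⁻¹ := by
            rw [← mul_assoc, mul_assoc (permMat σ⁻¹) B (permMat σ)]
      _ = permMat σ⁻¹ * (permMat σ * A) * permMat σ⁻¹ := by rw [h]
      _ = (permMat σ⁻¹ * permMat σ) * A * permMat σ⁻¹ := by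
            rw [mul_assoc (permMat σ⁻¹) (permMat σ) A]
      _ = A * permMat σ⁻¹ := by rw [permMat_inv_mul, one_mul]
  · rintro A B C ⟨σ, h1⟩ ⟨τ, h2⟩
    refine ⟨τ * σ, ?_⟩
    rw [permMat_mul, mul_assoc, h1, ← mul_assoc, h2, mul_assoc]

/-- All six permutations of `Fin 3`. -/
def perms3 : List (Equiv.Perm (Fin 3)) :=
  [1, Equiv.swap 0 1, Equiv.swap 0 2, Equiv.swap 1 2,
   Equiv.swap 0 1 * Equiv.swap 0 2, Equiv.swap 0 2 * Equiv.swap 0 1]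

lemma mem_perms3 : ∀ σ : Equiv.Perm (Fin 3), σ ∈ perms3 := by decide

lemma permConj_iff (A B : Matrix (Fin 3) (Fin 3) ℕ) :
    PermConj A B ↔ ∃ σ ∈ perms3, permMat σ * A = B * permMat σ := by
  constructor
  · rintro ⟨σ, h⟩; exact ⟨σ, mem_perms3 σ, h⟩
  · rintro ⟨σ, _, h⟩; exact ⟨σ, h⟩

instance (A B : Matrix (Fin 3) (Fin 3) ℕ) : Decidable (PermConj A B) :=
  decidable_of_iff' _ (permConj_iff A B)

/-- The sixteen representative matrices. -/
def repM : Fin 16 → Matrix (Fin 3) (Fin 3) ℕ :=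
  ![!![0,0,3;0,3,0;3,0,0], !![0,0,3;1,2,0;2,1,0], !![0,0,3;2,1,0;1,2,0],
    !![0,0,3;3,0,0;0,3,0], !![0,1,2;1,1,1;2,1,0], !![0,1,2;1,2,0;2,0,1],
    !![0,1,2;2,0,1;1,2,0], !![0,1,2;2,1,0;1,1,1], !![1,0,2;0,3,0;2,0,1],
    !![1,0,2;1,2,0;1,1,1], !![1,0,2;2,1,0;0,2,1], !![1,1,1;1,1,1;1,1,1],
    !![1,1,1;1,2,0;1,0,2], !![2,0,1;0,3,0;1,0,2], !![2,0,1;1,2,0;0,1,2],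
    !![3,0,0;0,3,0;0,0,3]]

def reps (k : Fin 16) : RegMat 3 3 :=
  ⟨repM k, by fin_cases k <;> decide⟩

lemma reps_inj : ∀ i j : Fin 16, PermConj (reps i).1 (reps j).1 → i = j := by decide

set_option maxHeartbeats 2000000 in
lemma surj_aux' (a b c d e f g h i : ℕ)
    (r0 : a+b+c=3) (r1 : d+e+f=3) (r2 : g+h+i=3)
    (c0 : a+d+g=3) (c1 : b+e+h=3) (c2 : c+f+i=3) :
    ∃ k : Fin 16, PermConj (reps k).1 !![a,b,c;d,e,f;g,h,i] := by
  have hc : c = 3 - a - b := by omega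
  subst hc
  have hf : f = 3 - d - e := by omega
  subst hf
  have hg : g = 3 - a - d := by omega
  subst hg
  have hh : h = 3 - b - e := by omega
  subst hh
  have hi : i = 3 - (3 - a - d) - (3 - b - e) := by omega
  subst hi
  have ha : a = 0 ∨ a = 1 ∨ a = 2 ∨ a = 3 := by omega
  have hb : b = 0 ∨ b = 1 ∨ b = 2 ∨ b = 3 := by omega
  have hd : d = 0 ∨ d = 1 ∨ d = 2 ∨ d = 3 := by omega
  have he : e = 0 ∨ e = 1 ∨ e = 2 ∨ e = 3 := by omega
  rcases ha with rfl|rfl|rfl|rfl <;> rcases hb with rfl|rfl|rfl|rfl <;>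
  rcases hd with rfl|rfl|rfl|rfl <;> rcases he with rfl|rfl|rfl|rfl <;>
  first
  | omega
  | decide

/-- there are exactly 16 permutation-conjugacy classes of 3×3
ℕ-matrices with all row and column sums equal to 3. -/
theorem card_classes_reg_3_3 :
    Nat.card (Quot (fun A B : RegMat 3 3 => PermConj A.1 B.1)) = 16 := by
  set r : RegMat 3 3 → RegMat 3 3 → Prop := fun A B => PermConj A.1 B.1 with hr
  have hE : Equivalence r :=
    ⟨fun A => permConj_equivalence.refl A.1,
     fun h => permConj_equivalence.symm h,
     fun h1 h2 => permConj_equivalence.trans h1 h2⟩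
  have key : Function.Bijective (fun k : Fin 16 => Quot.mk r (reps k)) := by
    constructor
    · intro i j hij
      exact reps_inj i j ((hE.eqvGen_iff).mp (Quot.eq.mp hij))
    · intro q
      induction q using Quot.ind with
      | _ A =>
        obtain ⟨M, hM⟩ := A
        have e : M = !![M 0 0, M 0 1, M 0 2; M 1 0, M 1 1, M 1 2; M 2 0, M 2 1, M 2 2] := by
          ext i j
          fin_cases i <;> fin_cases j <;> rfl
        have r0 := (hM 0).1; have r1 := (hM 1).1; have r2 := (hM 2).1
        have c0 := (hM 0).2; have c1 := (hM 1).2; have c2 := (hM 2).2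
        rw [Fin.sum_univ_three] at r0 r1 r2 c0 c1 c2
        obtain ⟨k, hk⟩ := surj_aux' _ _ _ _ _ _ _ _ _ r0 r1 r2 c0 c1 c2
        refine ⟨k, Quot.sound ?_⟩
        show PermConj (reps k).1 M
        rw [e]
        exact hk
  rw [← Nat.card_eq_of_bijective _ key, Nat.card_eq_fintype_card, Fintype.card_fin]
end

section
/- Let N ≥ 2 and l ≥ 2 be integers. For every matrix A indexed by {1,…,N}^{l-1} × {1,…,N}^{l-1} with natural-number entries all of whose row sums and column sums equal N, there exists a permutation σ of {1,…,N}^l such that A_σ = A. (That is, every directed regular graph with N^{l-1} vertices, N outgoing and N incoming edges at each vertex arises as the Mealy diagram of some permutation in 𝔖_{N,l}.) -/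
private lemma snoc_eq_snoc_iff' {n : ℕ} {α : Type*} {a b : Fin n → α} {x y : α} :
    @Fin.snoc n (fun _ => α) a x = @Fin.snoc n (fun _ => α) b y ↔ a = b ∧ x = y := by
  constructor
  · intro h
    refine ⟨?_, ?_⟩
    · have := congrArg Fin.init h
      simpa using this
    · have := congrArg (fun f => f (Fin.last n)) h
      simpa using this
  · rintro ⟨rfl, rfl⟩; rfl



/-- The transition matrix of a permutation `σ` of words of length `m+1` over the
alphabet `Fin N` (so `l = m + 1 ≥ 2`), indexed by words of length `m`. -/
def AmatGen {N m : ℕ} (σ : Equiv.Perm (Fin (m + 1) → Fin N)) :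
    Matrix (Fin m → Fin N) (Fin m → Fin N) ℕ :=
  fun J K => (Finset.univ.filter
    (fun nm : Fin N × Fin N => σ (Fin.cons nm.1 K) = Fin.snoc J nm.2)).card

/-- for `N ≥ 2`, `l = m + 1 ≥ 2`, every `N^m × N^m` ℕ-matrix whose
row and column sums all equal `N` arises as the transition matrix `A_σ` of some
permutation `σ` of `{1,…,N}^l`. -/
theorem AmatGen_surjective {N m : ℕ} (hN : 2 ≤ N) (hm : 1 ≤ m)
    (A : Matrix (Fin m → Fin N) (Fin m → Fin N) ℕ)
    (hA : ∀ K : Fin m → Fin N,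
      (∑ J : Fin m → Fin N, A J K = N) ∧ (∑ J : Fin m → Fin N, A K J = N)) :
    ∃ σ : Equiv.Perm (Fin (m + 1) → Fin N), AmatGen σ = A := by
  classical
  have hK : ∀ K, Fintype.card (Σ J : Fin m → Fin N, Fin (A J K)) = N := fun K => by
    simp [Fintype.card_sigma, (hA K).1]
  have hJ : ∀ J, Fintype.card (Σ K : Fin m → Fin N, Fin (A J K)) = N := fun J => by
    simp [Fintype.card_sigma, (hA J).2]
  let fK : ∀ K : Fin m → Fin N, Fin N ≃ Σ J : Fin m → Fin N, Fin (A J K) :=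
    fun K => (Fintype.equivFinOfCardEq (hK K)).symm
  let gJ : ∀ J : Fin m → Fin N, (Σ K : Fin m → Fin N, Fin (A J K)) ≃ Fin N :=
    fun J => Fintype.equivFinOfCardEq (hJ J)
  let sw : (Σ K : Fin m → Fin N, Σ J : Fin m → Fin N, Fin (A J K)) ≃
      (Σ J : Fin m → Fin N, Σ K : Fin m → Fin N, Fin (A J K)) :=
    ⟨fun x => ⟨x.2.1, x.1, x.2.2⟩, fun x => ⟨x.2.1, x.1, x.2.2⟩, fun _ => rfl, fun _ => rfl⟩
  let mid : Fin N × (Fin m → Fin N) ≃ (Fin m → Fin N) × Fin N :=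
    (Equiv.prodComm _ _).trans ((Equiv.sigmaEquivProd _ _).symm.trans
      ((Equiv.sigmaCongrRight fun K => fK K).trans (sw.trans
        ((Equiv.sigmaCongrRight fun J => gJ J).trans (Equiv.sigmaEquivProd _ _)))))
  let σ : Equiv.Perm (Fin (m+1) → Fin N) :=
    (Fin.consEquiv fun _ => Fin N).symm.trans (mid.trans
      ((Equiv.prodComm _ _).trans (Fin.snocEquiv fun _ => Fin N)))
  have hmid : ∀ (n : Fin N) (K : Fin m → Fin N),
      mid (n, K) = ((fK K n).1, gJ (fK K n).1 ⟨K, (fK K n).2⟩) := fun n K => rfl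
  have hσ : ∀ (n : Fin N) (K : Fin m → Fin N),
      σ (Fin.cons n K) = Fin.snoc (fK K n).1 (gJ (fK K n).1 ⟨K, (fK K n).2⟩) := by
    intro n K
    have h1 : (Fin.consEquiv fun _ : Fin (m+1) => Fin N).symm (Fin.cons n K) = (n, K) := by
      rw [Equiv.symm_apply_eq]; rfl
    show ((Equiv.prodComm _ _).trans (Fin.snocEquiv fun _ => Fin N))
        (mid ((Fin.consEquiv fun _ => Fin N).symm (Fin.cons n K))) = _
    rw [h1, hmid]
    rfl
  refine ⟨σ, ?_⟩
  funext J K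
  have hiff : ∀ nm : Fin N × Fin N,
      (σ (Fin.cons nm.1 K) = Fin.snoc J nm.2) ↔
        ((fK K nm.1).1 = J ∧ gJ (fK K nm.1).1 ⟨K, (fK K nm.1).2⟩ = nm.2) := by
    intro nm
    rw [hσ, snoc_eq_snoc_iff']
  have e1 : {nm : Fin N × Fin N //
        (fK K nm.1).1 = J ∧ gJ (fK K nm.1).1 ⟨K, (fK K nm.1).2⟩ = nm.2} ≃
      {n : Fin N // (fK K n).1 = J} :=
    { toFun := fun x => ⟨x.1.1, x.2.1⟩
      invFun := fun n => ⟨(n.1, gJ (fK K n.1).1 ⟨K, (fK K n.1).2⟩), ⟨n.2, rfl⟩⟩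
      left_inv := by
        rintro ⟨⟨n, mm⟩, h1, h2⟩
        apply Subtype.ext
        show (n, _) = (n, mm)
        rw [h2]
      right_inv := by rintro ⟨n, h⟩; rfl }
  have e2 : {n : Fin N // (fK K n).1 = J} ≃
      {x : Σ J' : Fin m → Fin N, Fin (A J' K) // x.1 = J} :=
    (fK K).subtypeEquiv (fun _ => Iff.rfl)
  have e3 : {x : Σ J' : Fin m → Fin N, Fin (A J' K) // x.1 = J} ≃ Fin (A J K) :=
    { toFun := fun x => x.2 ▸ x.1.2
      invFun := fun b => ⟨⟨J, b⟩, rfl⟩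
      left_inv := by rintro ⟨⟨J', b⟩, rfl⟩; rfl
      right_inv := fun b => rfl }
  calc AmatGen σ J K
      = (Finset.univ.filter (fun nm : Fin N × Fin N =>
          (fK K nm.1).1 = J ∧ gJ (fK K nm.1).1 ⟨K, (fK K nm.1).2⟩ = nm.2)).card := by
        unfold AmatGen
        exact Finset.card_bij (fun x _ => x)
          (fun x hx => by
            simp only [Finset.mem_filter, Finset.mem_univ, true_and] at hx ⊢
            exact (hiff x).mp hx)
          (fun _ _ _ _ h => h)
          (fun x hx => ⟨x, by
            simp only [Finset.mem_filter, Finset.mem_univ, true_and] at hx ⊢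
            exact (hiff x).mpr hx, rfl⟩)
    _ = Fintype.card {nm : Fin N × Fin N //
          (fK K nm.1).1 = J ∧ gJ (fK K nm.1).1 ⟨K, (fK K nm.1).2⟩ = nm.2} :=
        (Fintype.card_subtype _).symm
    _ = Fintype.card (Fin (A J K)) := Fintype.card_congr (e1.trans (e2.trans e3))
    _ = A J K := Fintype.card_fin _
end

section
/- Let g be a finite directed multigraph with adjacency matrix A. The number of 3-cycles of g, i.e., the number of orbits of the rotation action of ℤ/3ℤ on the set of closed walks of length 3 in g, equals (1/3)·Tr(A³ + 2A); that is, 3·c₃(g) = Tr(A³) + 2·Tr(A). -/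
/-- Adjacency matrix of the finite directed multigraph with edge set `E`,
vertex set `V` and source/target maps `s t : E → V`:
`A_{ij} = #{e : s e = i ∧ t e = j}`. -/
def adjMat {V E : Type*} [Fintype E] [DecidableEq V] (s t : E → V) : Matrix V V ℕ :=
  fun i j => (Finset.univ.filter (fun e => s e = i ∧ t e = j)).card

/-- A closed walk of length `k`: a function `e : ZMod k → E` with
`t (e i) = s (e (i+1))` for all `i`. -/
def IsClosedWalk {V E : Type*} (s t : E → V) (k : ℕ) (e : ZMod k → E) : Prop :=
  ∀ i, t (e i) = s (e (i + 1))

/-- The rotation relation on closed walks of length `k`: `w₁ ~ w₂` iff `w₂` is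
obtained from `w₁` by rotating indices by some `r : ZMod k`. -/
def RotRel {V E : Type*} (s t : E → V) (k : ℕ)
    (w₁ w₂ : {e : ZMod k → E // IsClosedWalk s t k e}) : Prop :=
  ∃ r : ZMod k, ∀ i, w₁.1 (i + r) = w₂.1 i

/-- `cyc s t k` is the number of `k`-cycles of the graph: the number of orbits
of the rotation action of `ZMod k` on closed walks of length `k`. -/
noncomputable def cyc {V E : Type*} (s t : E → V) (k : ℕ) : ℕ :=
  Nat.card (Quot (RotRel s t k))

section Aux

set_option linter.unusedSectionVars false

variable {V E : Type*} [Fintype V] [Fintype E] [DecidableEq V] (s t : E → V)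

/-- The type of closed walks of length 3. -/
abbrev Walk3 (s t : E → V) := {e : ZMod 3 → E // IsClosedWalk s t 3 e}

lemma zmod3_cases (i : ZMod 3) : i = 0 ∨ i = 1 ∨ i = 2 := by revert i; decide

/-- The rotation action of `ZMod 3` on closed walks of length 3. -/
instance : AddAction (ZMod 3) (Walk3 s t) where
  vadd r w := ⟨fun i => w.1 (i + r), fun i => by
    have h := w.2 (i + r)
    rwa [add_right_comm] at h⟩
  zero_vadd w := Subtype.ext (funext fun i => by
    show w.1 (i + 0) = w.1 i
    rw [add_zero])
  add_vadd a b w := Subtype.ext (funext fun i => by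
    show w.1 (i + (a + b)) = w.1 (i + a + b)
    rw [add_assoc])

lemma vadd_def (r : ZMod 3) (w : Walk3 s t) (i : ZMod 3) :
    (r +ᵥ w).1 i = w.1 (i + r) := rfl

lemma rot_iff (w₁ w₂ : Walk3 s t) :
    RotRel s t 3 w₁ w₂ ↔ AddAction.orbitRel (ZMod 3) (Walk3 s t) w₁ w₂ := by
  rw [AddAction.orbitRel_apply, AddAction.mem_orbit_iff]
  constructor
  · rintro ⟨r, h⟩
    refine ⟨-r, Subtype.ext (funext fun i => ?_)⟩
    rw [vadd_def]
    have := h (i + -r)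
    rw [add_assoc, neg_add_cancel, add_zero] at this
    exact this.symm
  · rintro ⟨g, rfl⟩
    refine ⟨-g, fun i => ?_⟩
    rw [vadd_def, add_assoc, neg_add_cancel, add_zero]

lemma trace_adj : Matrix.trace (adjMat s t) =
    (Finset.univ.filter (fun e => t e = s e)).card := by
  rw [Finset.card_eq_sum_card_fiberwise (f := s) (t := Finset.univ)
    (fun x _ => Finset.mem_univ _)]
  unfold Matrix.trace adjMat Matrix.diag
  refine Finset.sum_congr rfl fun i _ => ?_
  rw [Finset.filter_filter]
  refine congrArg Finset.card (Finset.filter_congr fun e _ => ?_)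
  constructor
  · rintro ⟨h1, h2⟩; exact ⟨h2.trans h1.symm, h1⟩
  · rintro ⟨h1, h2⟩; exact ⟨h2, h1.trans h2⟩

lemma trace_adj_cube : Matrix.trace ((adjMat s t) ^ 3) =
    (Finset.univ.filter (fun p : E × E × E =>
      t p.1 = s p.2.1 ∧ t p.2.1 = s p.2.2 ∧ t p.2.2 = s p.1)).card := by
  have expand : Matrix.trace ((adjMat s t) ^ 3) =
      ∑ x : V × V × V, adjMat s t x.1 x.2.1 * adjMat s t x.2.1 x.2.2
        * adjMat s t x.2.2 x.1 := by
    rw [pow_succ, pow_two, Matrix.trace]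
    simp only [Matrix.diag, Matrix.mul_apply, Finset.sum_mul, Finset.mul_sum,
      Fintype.sum_prod_type]
    exact Finset.sum_congr rfl fun i _ => Finset.sum_comm
  rw [expand,
    Finset.card_eq_sum_card_fiberwise (f := fun p : E × E × E => (s p.1, s p.2.1, s p.2.2))
      (t := Finset.univ) (fun x _ => Finset.mem_univ _)]
  refine Finset.sum_congr rfl fun x _ => ?_
  obtain ⟨i, j, k⟩ := x
  unfold adjMat
  rw [mul_assoc, ← Finset.card_product, ← Finset.card_product,
    ← Finset.filter_product, ← Finset.filter_product, Finset.univ_product_univ,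
    Finset.univ_product_univ, Finset.filter_filter]
  refine congrArg Finset.card ?_
  refine Finset.filter_congr fun p _ => ?_
  obtain ⟨a, b, c⟩ := p
  simp only [Prod.mk.injEq]
  constructor
  · rintro ⟨⟨h1, h2⟩, ⟨h3, h4⟩, h5, h6⟩
    exact ⟨⟨h2.trans h3.symm, h4.trans h5.symm, h6.trans h1.symm⟩, h1, h3, h5⟩
  · rintro ⟨⟨h1, h2, h3⟩, h4, h5, h6⟩
    exact ⟨⟨h4, h1.trans h5⟩, ⟨h5, h2.trans h6⟩, h6, h3.trans h4⟩

/-- Closed walks of length 3 are triples of consecutively matching edges. -/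
noncomputable def walkEquivTriple :
    Walk3 s t ≃ {p : E × E × E // t p.1 = s p.2.1 ∧ t p.2.1 = s p.2.2 ∧ t p.2.2 = s p.1} where
  toFun w := ⟨(w.1 0, w.1 1, w.1 2), by
    refine ⟨?_, ?_, ?_⟩
    · have := w.2 0; rwa [show (0 + 1 : ZMod 3) = 1 by decide] at this
    · have := w.2 1; rwa [show (1 + 1 : ZMod 3) = 2 by decide] at this
    · have := w.2 2; rwa [show (2 + 1 : ZMod 3) = 0 by decide] at this⟩
  invFun p := ⟨fun i => if i = 0 then p.1.1 else if i = 1 then p.1.2.1 else p.1.2.2, by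
    intro i
    rcases zmod3_cases i with rfl | rfl | rfl
    · rw [show ((0 : ZMod 3) + 1) = 1 by decide]
      simp only [if_pos rfl, if_neg (by decide : (1 : ZMod 3) ≠ 0), if_pos rfl]
      exact p.2.1
    · rw [show ((1 : ZMod 3) + 1) = 2 by decide]
      simp only [if_neg (by decide : (1 : ZMod 3) ≠ 0), if_pos rfl,
        if_neg (by decide : (2 : ZMod 3) ≠ 0), if_neg (by decide : (2 : ZMod 3) ≠ 1)]
      exact p.2.2.1
    · rw [show ((2 : ZMod 3) + 1) = 0 by decide]
      simp only [if_neg (by decide : (2 : ZMod 3) ≠ 0), if_neg (by decide : (2 : ZMod 3) ≠ 1),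
        if_pos rfl]
      exact p.2.2.2⟩
  left_inv w := by
    refine Subtype.ext (funext fun i => ?_)
    rcases zmod3_cases i with rfl | rfl | rfl
    · simp
    · simp only [if_neg (by decide : (1 : ZMod 3) ≠ 0), if_pos rfl]
      simp
    · simp only [if_neg (by decide : (2 : ZMod 3) ≠ 0), if_neg (by decide : (2 : ZMod 3) ≠ 1)]
  right_inv p := by
    refine Subtype.ext ?_
    simp only [if_pos rfl, if_neg (by decide : (1 : ZMod 3) ≠ 0),
      if_neg (by decide : (2 : ZMod 3) ≠ 0), if_neg (by decide : (2 : ZMod 3) ≠ 1)]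
    simp

/-- The constant closed walk at a loop. -/
def constWalk (e : E) (he : t e = s e) : Walk3 s t := ⟨fun _ => e, fun _ => he⟩

lemma fixed1 (w : Walk3 s t) (h : (1 : ZMod 3) +ᵥ w = w) : ∀ i, w.1 i = w.1 0 := by
  have h' : ∀ i, w.1 (i + 1) = w.1 i := fun i => congrFun (congrArg Subtype.val h) i
  have e1 : w.1 1 = w.1 0 := by
    have := h' 0; rwa [show (0 + 1 : ZMod 3) = 1 by decide] at this
  have e2 : w.1 2 = w.1 1 := by
    have := h' 1; rwa [show (1 + 1 : ZMod 3) = 2 by decide] at this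
  intro i
  rcases zmod3_cases i with rfl | rfl | rfl
  · rfl
  · exact e1
  · exact e2.trans e1

lemma fixed2 (w : Walk3 s t) (h : (2 : ZMod 3) +ᵥ w = w) : ∀ i, w.1 i = w.1 0 := by
  have h' : ∀ i, w.1 (i + 2) = w.1 i := fun i => congrFun (congrArg Subtype.val h) i
  have e1 : w.1 2 = w.1 0 := by
    have := h' 0; rwa [show (0 + 2 : ZMod 3) = 2 by decide] at this
  have e2 : w.1 0 = w.1 1 := by
    have := h' 1; rwa [show (1 + 2 : ZMod 3) = 0 by decide] at this
  intro i
  rcases zmod3_cases i with rfl | rfl | rfl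
  · rfl
  · exact e2.symm
  · exact e1

/-- Walks fixed by a nontrivial rotation are constant, hence loops. -/
noncomputable def fixedEquiv (r : ZMod 3)
    (hr : ∀ w : Walk3 s t, r +ᵥ w = w → ∀ i, w.1 i = w.1 0) :
    ↥(AddAction.fixedBy (Walk3 s t) r) ≃ {e : E // t e = s e} where
  toFun w := ⟨w.1.1 0, by
    have h0 := w.1.2 0
    rwa [hr w.1 w.2 (0 + 1)] at h0⟩
  invFun e := ⟨constWalk s t e.1 e.2, Subtype.ext (funext fun i => rfl)⟩
  left_inv w := Subtype.ext (Subtype.ext (funext fun i => (hr w.1 w.2 i).symm))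
  right_inv e := Subtype.ext rfl

noncomputable instance (r : ZMod 3) : Fintype ↥(AddAction.fixedBy (Walk3 s t) r) :=
  Fintype.ofFinite _

noncomputable instance : Fintype (Quotient (AddAction.orbitRel (ZMod 3) (Walk3 s t))) :=
  Fintype.ofFinite _

noncomputable instance : Fintype (Walk3 s t) := Fintype.ofFinite _

end Aux

/-- the number of 3-cycles (orbits of the rotation action of
`ZMod 3` on closed walks of length 3) satisfies `3·c₃(g) = Tr(A³) + 2·Tr(A)`,
i.e. `c₃(g) = ⅓·Tr(A³ + 2A)`. -/
theorem three_mul_c3_eq_trace {V E : Type*} [Fintype V] [Fintype E]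
    [DecidableEq V] (s t : E → V) :
    3 * cyc s t 3 =
      Matrix.trace ((adjMat s t) ^ 3) + 2 * Matrix.trace (adjMat s t) := by
  classical
  have key := AddAction.sum_card_fixedBy_eq_card_orbits_mul_card_addGroup
    (ZMod 3) (Walk3 s t)
  have sum3 : ∀ f : ZMod 3 → ℕ, ∑ a : ZMod 3, f a = f 0 + f 1 + f 2 := by
    intro f
    rw [show (Finset.univ : Finset (ZMod 3)) = {0, 1, 2} by decide,
      Finset.sum_insert (by decide), Finset.sum_insert (by decide), Finset.sum_singleton]
    omega
  rw [sum3, ZMod.card] at key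
  have c0 : Fintype.card ↥(AddAction.fixedBy (Walk3 s t) (0 : ZMod 3)) =
      Matrix.trace ((adjMat s t) ^ 3) := by
    have huniv : AddAction.fixedBy (Walk3 s t) (0 : ZMod 3) = Set.univ := by
      ext w
      simp [AddAction.mem_fixedBy]
    calc Fintype.card ↥(AddAction.fixedBy (Walk3 s t) (0 : ZMod 3))
        = Fintype.card (Walk3 s t) :=
          Fintype.card_congr ((Equiv.setCongr huniv).trans (Equiv.Set.univ _))
      _ = Fintype.card {p : E × E × E //
            t p.1 = s p.2.1 ∧ t p.2.1 = s p.2.2 ∧ t p.2.2 = s p.1} :=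
          Fintype.card_congr (walkEquivTriple s t)
      _ = Matrix.trace ((adjMat s t) ^ 3) := by
          rw [Fintype.card_subtype, trace_adj_cube]
  have c1 : Fintype.card ↥(AddAction.fixedBy (Walk3 s t) (1 : ZMod 3)) =
      Matrix.trace (adjMat s t) := by
    calc Fintype.card ↥(AddAction.fixedBy (Walk3 s t) (1 : ZMod 3))
        = Fintype.card {e : E // t e = s e} :=
          Fintype.card_congr (fixedEquiv s t 1 (fixed1 s t))
      _ = Matrix.trace (adjMat s t) := by rw [Fintype.card_subtype, trace_adj]
  have c2 : Fintype.card ↥(AddAction.fixedBy (Walk3 s t) (2 : ZMod 3)) =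
      Matrix.trace (adjMat s t) := by
    calc Fintype.card ↥(AddAction.fixedBy (Walk3 s t) (2 : ZMod 3))
        = Fintype.card {e : E // t e = s e} :=
          Fintype.card_congr (fixedEquiv s t 2 (fixed2 s t))
      _ = Matrix.trace (adjMat s t) := by rw [Fintype.card_subtype, trace_adj]
  rw [c0, c1, c2] at key
  have hΩ : cyc s t 3 =
      Fintype.card (Quotient (AddAction.orbitRel (ZMod 3) (Walk3 s t))) := by
    rw [cyc, ← Nat.card_eq_fintype_card]
    exact Nat.card_congr (Quot.congrRight fun a b => rot_iff s t a b)
  rw [hΩ]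
  omega
end

section
/- Let σ be the permutation of {1,2,3}×{1,2,3} sending 11↦23, 12↦31, 13↦12, 21↦32, 22↦13, 23↦21, 31↦11, 32↦22, 33↦33, and let η be the permutation sending 11↦32, 12↦11, 13↦12, 21↦33, 22↦22, 23↦13, 31↦23, 32↦21, 33↦31. Then A_σ is the 3×3 all-ones matrix, A_η is the matrix with rows (0,1,2), (1,2,0), (2,0,1), and A_σ and A_η are not permutation-conjugate; indeed Tr(A_σ² + A_σ) = 12 while Tr(A_η² + A_η) = 18. -/
def sigFun : Fin 3 × Fin 3 → Fin 3 × Fin 3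
  | (0, 0) => (1, 2) | (0, 1) => (2, 0) | (0, 2) => (0, 1)
  | (1, 0) => (2, 1) | (1, 1) => (0, 2) | (1, 2) => (1, 0)
  | (2, 0) => (0, 0) | (2, 1) => (1, 1) | (2, 2) => (2, 2)

def sigInv : Fin 3 × Fin 3 → Fin 3 × Fin 3
  | (1, 2) => (0, 0) | (2, 0) => (0, 1) | (0, 1) => (0, 2)
  | (2, 1) => (1, 0) | (0, 2) => (1, 1) | (1, 0) => (1, 2)
  | (0, 0) => (2, 0) | (1, 1) => (2, 1) | (2, 2) => (2, 2)

def sigPerm : Equiv.Perm (Fin 3 × Fin 3) :=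
  ⟨sigFun, sigInv, by decide, by decide⟩

def etaFun : Fin 3 × Fin 3 → Fin 3 × Fin 3
  | (0, 0) => (2, 1) | (0, 1) => (0, 0) | (0, 2) => (0, 1)
  | (1, 0) => (2, 2) | (1, 1) => (1, 1) | (1, 2) => (0, 2)
  | (2, 0) => (1, 2) | (2, 1) => (1, 0) | (2, 2) => (2, 0)

def etaInv : Fin 3 × Fin 3 → Fin 3 × Fin 3
  | (2, 1) => (0, 0) | (0, 0) => (0, 1) | (0, 1) => (0, 2)
  | (2, 2) => (1, 0) | (1, 1) => (1, 1) | (0, 2) => (1, 2)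
  | (1, 2) => (2, 0) | (1, 0) => (2, 1) | (2, 0) => (2, 2)

def etaPerm : Equiv.Perm (Fin 3 × Fin 3) :=
  ⟨etaFun, etaInv, by decide, by decide⟩

/-- for the permutations σ (11↦23, 12↦31, 13↦12, 21↦32, 22↦13,
23↦21, 31↦11, 32↦22, 33↦33) and η (11↦32, 12↦11, 13↦12, 21↦33, 22↦22, 23↦13,
31↦23, 32↦21, 33↦31) of `{1,2,3}×{1,2,3}` (written here 0-based), `A_σ` is the
all-ones matrix, `A_η = !![0,1,2; 1,2,0; 2,0,1]`, and they are not
permutation-conjugate; indeed `Tr(A_σ² + A_σ) = 12` while `Tr(A_η² + A_η) = 18`. -/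
theorem example_sigma_eta (σ η : Equiv.Perm (Fin 3 × Fin 3))
    (hσ1 : σ (0, 0) = (1, 2)) (hσ2 : σ (0, 1) = (2, 0)) (hσ3 : σ (0, 2) = (0, 1))
    (hσ4 : σ (1, 0) = (2, 1)) (hσ5 : σ (1, 1) = (0, 2)) (hσ6 : σ (1, 2) = (1, 0))
    (hσ7 : σ (2, 0) = (0, 0)) (hσ8 : σ (2, 1) = (1, 1)) (hσ9 : σ (2, 2) = (2, 2))
    (hη1 : η (0, 0) = (2, 1)) (hη2 : η (0, 1) = (0, 0)) (hη3 : η (0, 2) = (0, 1))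
    (hη4 : η (1, 0) = (2, 2)) (hη5 : η (1, 1) = (1, 1)) (hη6 : η (1, 2) = (0, 2))
    (hη7 : η (2, 0) = (1, 2)) (hη8 : η (2, 1) = (1, 0)) (hη9 : η (2, 2) = (2, 0)) :
    Amat σ = !![1, 1, 1; 1, 1, 1; 1, 1, 1] ∧
    Amat η = !![0, 1, 2; 1, 2, 0; 2, 0, 1] ∧
    ¬ PermConj (Amat σ) (Amat η) ∧
    Matrix.trace ((Amat σ) ^ 2 + Amat σ) = 12 ∧
    Matrix.trace ((Amat η) ^ 2 + Amat η) = 18 := by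
  have hs : σ = sigPerm := by
    apply Equiv.ext; intro p
    fin_cases p <;>
      first
        | exact hσ1 | exact hσ2 | exact hσ3 | exact hσ4 | exact hσ5
        | exact hσ6 | exact hσ7 | exact hσ8 | exact hσ9
  have he : η = etaPerm := by
    apply Equiv.ext; intro p
    fin_cases p <;>
      first
        | exact hη1 | exact hη2 | exact hη3 | exact hη4 | exact hη5
        | exact hη6 | exact hη7 | exact hη8 | exact hη9
  subst hs he
  refine ⟨by decide, by decide, ?_, by decide, by decide⟩
  unfold PermConj
  decide
end

section
/- There exist 4×4 matrices A and B with natural-number entries, all of whose row sums and column sums equal 2, such that the directed multigraphs g_A and g_B with adjacency matrices A and B satisfy c₁(g_A) = c₁(g_B) and c₂(g_A) = c₂(g_B), yet A and B are not permutation-conjugate. (For example, one may take A with c₁ = 2, c₂ = 3, c₃ = 12 of type (2,0,0,0)b and B with c₁ = 2, c₂ = 3, c₃ = 4 of type (1,1,0,0)e.) -/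
/-- The edge set of the canonical directed multigraph with adjacency matrix `A`:
`A i j` parallel edges from `i` to `j`. -/
def MatEdge {n : ℕ} (A : Matrix (Fin n) (Fin n) ℕ) : Type :=
  (i : Fin n) × (j : Fin n) × Fin (A i j)

instance {n : ℕ} (A : Matrix (Fin n) (Fin n) ℕ) : Fintype (MatEdge A) := by
  unfold MatEdge
  haveI : ∀ i : Fin n, Fintype ((j : Fin n) × Fin (A i j)) := fun i => inferInstance
  infer_instance

/-- Source map of the canonical multigraph of `A`. -/
def matSrc {n : ℕ} (A : Matrix (Fin n) (Fin n) ℕ) : MatEdge A → Fin n :=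
  fun e => e.1

/-- Target map of the canonical multigraph of `A`. -/
def matTgt {n : ℕ} (A : Matrix (Fin n) (Fin n) ℕ) : MatEdge A → Fin n :=
  fun e => e.2.1


section Aux

variable {V E : Type*} (s t : E → V) (k : ℕ)

lemma rotRel_equivalence : Equivalence (RotRel s t k) := by
  constructor
  · intro w; exact ⟨0, fun i => by rw [add_zero]⟩
  · rintro w₁ w₂ ⟨r, h⟩
    refine ⟨-r, fun i => ?_⟩
    rw [← h (i + -r)]; congr 1; ring
  · rintro w₁ w₂ w₃ ⟨r₁, h₁⟩ ⟨r₂, h₂⟩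
    refine ⟨r₂ + r₁, fun i => ?_⟩
    rw [← h₂ i, ← h₁ (i + r₂)]; congr 1; ring

/-- The rotation relation as a setoid. -/
def walkSetoid : Setoid {e : ZMod k → E // IsClosedWalk s t k e} :=
  ⟨RotRel s t k, rotRel_equivalence s t k⟩

variable [DecidableEq V] [DecidableEq E] [Fintype E] [NeZero k]

instance : DecidablePred (IsClosedWalk s t k) := fun e =>
  inferInstanceAs (Decidable (∀ i, t (e i) = s (e (i + 1))))

instance : Fintype (Quotient (walkSetoid s t k)) :=
  @Quotient.fintype _ _ (walkSetoid s t k)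
    (fun w₁ w₂ => inferInstanceAs (Decidable (∃ r : ZMod k, ∀ i, w₁.1 (i + r) = w₂.1 i)))

lemma cyc_eq_card :
    cyc s t k = Fintype.card (Quotient (walkSetoid s t k)) :=
  @Nat.card_eq_fintype_card (Quotient (walkSetoid s t k)) _

end Aux

instance {n : ℕ} (A : Matrix (Fin n) (Fin n) ℕ) : DecidableEq (MatEdge A) := by
  unfold MatEdge; infer_instance

instance {n : Type*} [Fintype n] [DecidableEq n] (A B : Matrix n n ℕ) :
    Decidable (PermConj A B) :=
  inferInstanceAs (Decidable (∃ σ : Equiv.Perm n, permMat σ * A = B * permMat σ))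

/-- there exist 4×4 ℕ-matrices `A`, `B` with all row and column
sums equal to 2 whose directed multigraphs have the same numbers of 1-cycles
and of 2-cycles, yet `A` and `B` are not permutation-conjugate. -/
theorem exists_same_c1_c2_not_permConj :
    ∃ A B : Matrix (Fin 4) (Fin 4) ℕ,
      (∀ i, (∑ j, A i j = 2) ∧ (∑ j, A j i = 2)) ∧
      (∀ i, (∑ j, B i j = 2) ∧ (∑ j, B j i = 2)) ∧
      cyc (matSrc A) (matTgt A) 1 = cyc (matSrc B) (matTgt B) 1 ∧
      cyc (matSrc A) (matTgt A) 2 = cyc (matSrc B) (matTgt B) 2 ∧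
      ¬ PermConj A B := by
  refine ⟨!![0,0,0,2; 0,2,0,0; 2,0,0,0; 0,0,2,0],
          !![0,0,1,1; 1,1,0,0; 0,0,1,1; 1,1,0,0],
          by decide, by decide, ?_, ?_, by decide⟩
  · rw [cyc_eq_card, cyc_eq_card]; decide
  · rw [cyc_eq_card, cyc_eq_card]; decide
end
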